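/- Let Γ = (V,E) be a finite graph and let A be a real symmetric matrix indexed by V with A_{uv} = 0 whenever u = v or {u,v} ∉ E. Suppose the all-ones vector 1 is an eigenvector of A with eigenvalue η1, that η1 is the largest eigenvalue of A, and let η_min be the smallest eigenvalue of A, with η_min < η1. If S is an independent set of Γ with |S| = |V| · (−η_min)/(η1 − η_min), then the vector 1_S − (|S|/|V|)·1 satisfies A(1_S − (|S|/|V|)·1) = η_min·(1_S − (|S|/|V|)·1); equivalently, the characteristic vector 1_S lies in the span of the all-ones vector together with the η_min-eigenspace of A. -/

import Mathlib

open Matrix in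
theorem ratio_bound_equality {V : Type*} [Fintype V] [DecidableEq V]
    (G : SimpleGraph V) (A : Matrix V V ℝ)
    (hsymm : A.IsSymm)
    (hzero : ∀ u v : V, ¬ G.Adj u v → A u v = 0)
    (η1 ηmin : ℝ)
    (hones : A.mulVec (fun _ => 1) = η1 • (fun _ => (1 : ℝ)))
    (hmax : ∀ (η : ℝ) (v : V → ℝ), v ≠ 0 → A.mulVec v = η • v → η ≤ η1)
    (hminEx : ∃ v : V → ℝ, v ≠ 0 ∧ A.mulVec v = ηmin • v)
    (hmin : ∀ (η : ℝ) (v : V → ℝ), v ≠ 0 → A.mulVec v = η • v → ηmin ≤ η)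
    (hlt : ηmin < η1)
    (S : Finset V) (hS : ∀ u ∈ S, ∀ v ∈ S, ¬ G.Adj u v)
    (heq : (S.card : ℝ) = (Fintype.card V : ℝ) * (-ηmin) / (η1 - ηmin)) :
    A.mulVec
        ((fun v => if v ∈ S then (1 : ℝ) else 0) -
          ((S.card : ℝ) / (Fintype.card V : ℝ)) • (fun _ => (1 : ℝ)))
      = ηmin • ((fun v => if v ∈ S then (1 : ℝ) else 0) -
          ((S.card : ℝ) / (Fintype.card V : ℝ)) • (fun _ => (1 : ℝ))) := by
  classical
  rcases isEmpty_or_nonempty V with hV | hV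
  · funext v; exact isEmptyElim v
  set n : ℝ := (Fintype.card V : ℝ) with hn
  have hn0 : n ≠ 0 := Nat.cast_ne_zero.mpr Fintype.card_ne_zero
  set α : ℝ := (S.card : ℝ) with hα
  set χ : V → ℝ := fun v => if v ∈ S then (1 : ℝ) else 0 with hχ
  set c : ℝ := α / n with hc
  set x : V → ℝ := χ - c • (fun _ => (1 : ℝ)) with hx
  -- Hermitian
  have hA : A.IsHermitian := by
    rw [Matrix.IsHermitian, Matrix.conjTranspose]
    ext i j
    simpa using hsymm.apply i j
  -- B = A - ηmin • 1 is positive semidefinite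
  set B : Matrix V V ℝ := A - ηmin • (1 : Matrix V V ℝ) with hB
  have hBH : B.IsHermitian := by
    rw [hB, Matrix.IsHermitian, Matrix.conjTranspose_sub, Matrix.conjTranspose_smul, hA.eq]
    simp
  have hBpsd : B.PosSemidef := by
    apply hBH.posSemidef_iff_eigenvalues_nonneg.mpr
    intro i
    have hv := hBH.mulVec_eigenvectorBasis i
    set v : V → ℝ := ⇑(hBH.eigenvectorBasis i) with hvdef
    have hvne : v ≠ 0 := by
      have := hBH.eigenvectorBasis.orthonormal.ne_zero i
      intro h
      apply this
      ext j
      exact congrFun h j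
    have hAv : A.mulVec v = (hBH.eigenvalues i + ηmin) • v := by
      have h2 : A.mulVec v = B.mulVec v + ηmin • v := by
        rw [hB, Matrix.sub_mulVec, Matrix.smul_mulVec, Matrix.one_mulVec]
        abel
      rw [h2, hv, add_smul]
    have := hmin _ _ hvne hAv
    show (0:ℝ) ≤ _
    linarith
  -- dot product computations
  have hχ1 : χ ⬝ᵥ (fun _ : V => (1:ℝ)) = α := by
    simp [hχ, dotProduct, hα]
  have h1χ : (fun _ : V => (1:ℝ)) ⬝ᵥ χ = α := by
    simp [hχ, dotProduct, hα]
  have hχχ : χ ⬝ᵥ χ = α := by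
    simp [hχ, dotProduct, ite_and, hα, mul_ite]
  have h11 : (fun _ : V => (1:ℝ)) ⬝ᵥ (fun _ : V => (1:ℝ)) = n := by
    simp [dotProduct, hn]
  have hχA1 : χ ⬝ᵥ A.mulVec (fun _ => 1) = η1 * α := by
    rw [hones, dotProduct_smul]
    rw [smul_eq_mul, hχ1]
  have h1A1 : (fun _ : V => (1:ℝ)) ⬝ᵥ A.mulVec (fun _ => 1) = η1 * n := by
    rw [hones, dotProduct_smul, smul_eq_mul, h11]
  have hvm : ∀ w : V → ℝ, (fun _ : V => (1:ℝ)) ⬝ᵥ A.mulVec w = (η1 • (fun _ : V => (1:ℝ))) ⬝ᵥ w := by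
    intro w
    rw [Matrix.dotProduct_mulVec, ← hones]
    congr 1
    rw [← Matrix.mulVec_transpose, hsymm.eq]
  have h1Aχ : (fun _ : V => (1:ℝ)) ⬝ᵥ A.mulVec χ = η1 * α := by
    rw [hvm, smul_dotProduct, smul_eq_mul, h1χ]
  have hχAχ : χ ⬝ᵥ A.mulVec χ = 0 := by
    simp only [dotProduct, Matrix.mulVec, hχ]
    apply Finset.sum_eq_zero
    intro u _
    by_cases hu : u ∈ S
    · simp only [hu, if_true]
      rw [Finset.sum_eq_zero, mul_zero]
      intro v _
      by_cases hv : v ∈ S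
      · rw [hzero u v (hS u hu v hv)]
        simp [hv]
      · simp [hv]
    · simp [hu]
  -- key arithmetic
  have hd : η1 - ηmin ≠ 0 := sub_ne_zero.mpr hlt.ne'
  have hkey : α * (η1 - ηmin) = n * (-ηmin) := by
    rw [heq, div_mul_cancel₀ _ hd]
  -- quadratic form of x is zero
  have hxBx : x ⬝ᵥ B.mulVec x = 0 := by
    have hBx : B.mulVec x = A.mulVec x - ηmin • x := by
      rw [hB, Matrix.sub_mulVec, Matrix.smul_mulVec, Matrix.one_mulVec]
    have hAx : A.mulVec x = A.mulVec χ - c • A.mulVec (fun _ => 1) := by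
      rw [hx, Matrix.mulVec_sub, Matrix.mulVec_smul]
    rw [hBx, hAx, hx]
    simp only [sub_dotProduct, dotProduct_sub, smul_dotProduct,
      dotProduct_smul, smul_eq_mul, Pi.sub_apply, Pi.smul_apply]
    rw [hχAχ, hχA1, h1Aχ, h1A1, hχχ, hχ1, h1χ, h11, hc]
    first
    | linear_combination (α / n) * hkey
    | linear_combination (-(α / n)) * hkey
    | (field_simp; linear_combination α * hkey)
    | (field_simp; linear_combination (-α) * hkey)
    | (field_simp; linear_combination n * α * hkey)
    | (field_simp; linear_combination (n*n*n*α) * hkey)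
    | (field_simp; linear_combination (-(n*n*n*α)) * hkey)
    | (field_simp; linear_combination (n*n*α) * hkey)
    | (field_simp; linear_combination (-(n*n*α)) * hkey)
    | (field_simp; nlinarith [hkey])
  have hBx0 : B.mulVec x = 0 := by
    have := (hBpsd.dotProduct_mulVec_zero_iff x).mp ?_
    · exact this
    · simpa using hxBx
  have : A.mulVec x = ηmin • x := by
    have hBx : B.mulVec x = A.mulVec x - ηmin • x := by
      rw [hB, Matrix.sub_mulVec, Matrix.smul_mulVec, Matrix.one_mulVec]
    rw [hBx] at hBx0
    linear_combination (norm := module) hBx0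
  exact this
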